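/- Let a, c ∈ ℝᵐ be nonzero vectors such that there is no λ > 0 with a = λc. Then for every b, d ∈ ℝ there exists u ∈ ℝᵐ with ⟨a, u⟩ ≤ b and ⟨c, u⟩ ≥ d. -/

import Mathlib

open scoped RealInnerProductSpace

/-- two half-space constraints `⟪a,u⟫ ≤ b` and `⟪c,u⟫ ≥ d` on the
control input always intersect unless the nonzero direction vectors `a` and `c`
are positively parallel. -/
theorem stmt_9 {m : ℕ}
    (a c : EuclideanSpace ℝ (Fin m))
    (ha : a ≠ 0) (hc : c ≠ 0)
    (hnp : ¬ ∃ l : ℝ, 0 < l ∧ a = l • c) :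
    ∀ b d : ℝ, ∃ u : EuclideanSpace ℝ (Fin m), ⟪a, u⟫ ≤ b ∧ ⟪c, u⟫ ≥ d := by
  intro b d
  have hna : (0:ℝ) < ‖a‖ ^ 2 := pow_pos (norm_pos_iff.mpr ha) 2
  have hia : ⟪a, a⟫ = ‖a‖ ^ 2 := real_inner_self_eq_norm_sq a
  set k : ℝ := ⟪a, c⟫ / ‖a‖ ^ 2 with hk
  set w : EuclideanSpace ℝ (Fin m) := c - k • a with hw
  have haw : ⟪a, w⟫ = 0 := by
    rw [hw, inner_sub_right, real_inner_smul_right, hia, hk]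
    field_simp
    ring
  by_cases hwz : w = 0
  · -- c = k • a, and k must be negative
    have hck : c = k • a := by
      have := sub_eq_zero.mp hwz
      simpa [hw] using this
    have hk0 : k ≠ 0 := by
      intro h0; rw [h0, zero_smul] at hck; exact hc hck
    have hklt : k < 0 := by
      rcases lt_or_gt_of_ne hk0 with h | h
      · exact h
      · exact absurd ⟨k⁻¹, by positivity, by
          rw [hck, smul_smul, inv_mul_cancel₀ hk0, one_smul]⟩ hnp
    refine ⟨(min (b / ‖a‖ ^ 2) (d / (k * ‖a‖ ^ 2))) • a, ?_, ?_⟩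
    · rw [real_inner_smul_right, hia]
      calc min (b / ‖a‖ ^ 2) (d / (k * ‖a‖ ^ 2)) * ‖a‖ ^ 2
          ≤ (b / ‖a‖ ^ 2) * ‖a‖ ^ 2 := by
            exact mul_le_mul_of_nonneg_right (min_le_left _ _) hna.le
        _ = b := by field_simp
    · rw [hck, real_inner_smul_left, real_inner_smul_right, hia]
      have hkn : k * ‖a‖ ^ 2 < 0 := mul_neg_of_neg_of_pos hklt hna
      have h1 : min (b / ‖a‖ ^ 2) (d / (k * ‖a‖ ^ 2)) ≤ d / (k * ‖a‖ ^ 2) :=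
        min_le_right _ _
      have := mul_le_mul_of_nonpos_right h1 hkn.le
      calc d = d / (k * ‖a‖ ^ 2) * (k * ‖a‖ ^ 2) := by field_simp
        _ ≤ min (b / ‖a‖ ^ 2) (d / (k * ‖a‖ ^ 2)) * (k * ‖a‖ ^ 2) := this
        _ = k * (min (b / ‖a‖ ^ 2) (d / (k * ‖a‖ ^ 2)) * ‖a‖ ^ 2) := by ring
    -- w ≠ 0
  · have hnw : (0:ℝ) < ‖w‖ ^ 2 := pow_pos (norm_pos_iff.mpr hwz) 2
    have hcw : ⟪c, w⟫ = ‖w‖ ^ 2 := by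
      have : c = k • a + w := by rw [hw]; abel
      rw [this, inner_add_left, real_inner_smul_left,
        real_inner_self_eq_norm_sq, haw]
      ring
    set s : ℝ := b / ‖a‖ ^ 2 with hs
    set t : ℝ := (d - s * ⟪c, a⟫) / ‖w‖ ^ 2 with ht
    refine ⟨s • a + t • w, ?_, ?_⟩
    · rw [inner_add_right, real_inner_smul_right, real_inner_smul_right,
        hia, haw, hs]
      field_simp
      simp
    · rw [inner_add_right, real_inner_smul_right, real_inner_smul_right, hcw, ht]
      have : (d - s * ⟪c, a⟫) / ‖w‖ ^ 2 * ‖w‖ ^ 2 = d - s * ⟪c, a⟫ := by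
        field_simp
      rw [this]; ring_nf; rfl
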